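/- Let R₁(s) be a q₁×k polynomial matrix with Smith decomposition R₁(s) = U₁(s)·[D₁(s) 0]·V₁(s), where U₁, V₁ are unimodular and D₁(s) is an invertible diagonal polynomial matrix. Let R₂(s) be a q₂×k polynomial matrix. Then there exists a polynomial matrix M(s) with R₂(s) = M(s)·R₁(s) if and only if (1) R₂(s)·V₁(s)⁻¹·[0; I] = 0, and (2) R₂(s)·V₁(s)⁻¹·[D₁(s)⁻¹; 0] is a polynomial matrix (i.e., each entry of this rational matrix lies in ℝ[s]). -/

import Mathlib

open scoped Matrix

/-- A rational matrix is a polynomial matrix if all its entries are polynomials. -/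
def IsPolyMat {ι κ : Type*} (M : Matrix ι κ (RatFunc ℝ)) : Prop :=
  ∀ i j, ∃ p : Polynomial ℝ, M i j = algebraMap (Polynomial ℝ) (RatFunc ℝ) p

lemma isPolyMat_iff_mem {ι κ : Type*} (M : Matrix ι κ (RatFunc ℝ)) :
    IsPolyMat M ↔ ∀ i j, M i j ∈ (algebraMap (Polynomial ℝ) (RatFunc ℝ)).range := by
  constructor <;> intro h i j <;> obtain ⟨p, hp⟩ := h i j <;> exact ⟨p, hp.symm⟩

lemma isPolyMat_mul {ι κ ρ : Type*} [Fintype κ] {A : Matrix ι κ (RatFunc ℝ)}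
    {B : Matrix κ ρ (RatFunc ℝ)} (hA : IsPolyMat A) (hB : IsPolyMat B) :
    IsPolyMat (A * B) := by
  rw [isPolyMat_iff_mem] at *
  intro i j
  rw [Matrix.mul_apply]
  exact Subring.sum_mem _ fun k _ => Subring.mul_mem _ (hA i k) (hB k j)

/-- Smith-form criterion for left divisibility of polynomial matrices (Lemma 1):
`R₂ = M·R₁` for a polynomial matrix `M` iff `R₂·V₁⁻¹·[0; I] = 0` and
`R₂·V₁⁻¹·[D₁⁻¹; 0]` is a polynomial matrix. -/
theorem smith_form_divisibility_criterion {q₁ q₂ m : ℕ}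
    (R₁ : Matrix (Fin q₁) (Fin q₁ ⊕ Fin m) (RatFunc ℝ))
    (R₂ : Matrix (Fin q₂) (Fin q₁ ⊕ Fin m) (RatFunc ℝ))
    (hR₁ : IsPolyMat R₁) (hR₂ : IsPolyMat R₂)
    (U₁ : Matrix (Fin q₁) (Fin q₁) (RatFunc ℝ))
    (hU₁ : IsPolyMat U₁ ∧ IsPolyMat U₁⁻¹ ∧ IsUnit U₁.det)
    (V₁ : Matrix (Fin q₁ ⊕ Fin m) (Fin q₁ ⊕ Fin m) (RatFunc ℝ))
    (hV₁ : IsPolyMat V₁ ∧ IsPolyMat V₁⁻¹ ∧ IsUnit V₁.det)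
    (D₁ : Matrix (Fin q₁) (Fin q₁) (RatFunc ℝ)) (d : Fin q₁ → RatFunc ℝ)
    (hD₁ : D₁ = Matrix.diagonal d) (hD₁poly : IsPolyMat D₁) (hD₁det : D₁.det ≠ 0)
    (hSmith : R₁ = U₁ * Matrix.fromCols D₁ 0 * V₁) :
    (∃ M : Matrix (Fin q₂) (Fin q₁) (RatFunc ℝ), IsPolyMat M ∧ R₂ = M * R₁) ↔
      (R₂ * V₁⁻¹ * Matrix.fromRows (0 : Matrix (Fin q₁) (Fin m) (RatFunc ℝ)) (1 : Matrix (Fin m) (Fin m) (RatFunc ℝ)) = 0 ∧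
       IsPolyMat (R₂ * V₁⁻¹ * Matrix.fromRows D₁⁻¹ (0 : Matrix (Fin m) (Fin q₁) (RatFunc ℝ)))) := by
  have hD₁u : IsUnit D₁.det := isUnit_iff_ne_zero.mpr hD₁det
  replace hSmith : R₁ = U₁ * Matrix.fromCols D₁ (0 : Matrix (Fin q₁) (Fin m) (RatFunc ℝ)) * V₁ := hSmith
  constructor
  · rintro ⟨M, hMpoly, rfl⟩
    have hX : M * R₁ * V₁⁻¹ = M * U₁ * Matrix.fromCols D₁ 0 := by
      rw [hSmith, ← Matrix.mul_assoc, Matrix.mul_nonsing_inv_cancel_right _ _ hV₁.2.2,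
        ← Matrix.mul_assoc]
    constructor
    · rw [hX, Matrix.mul_assoc, Matrix.fromCols_mul_fromRows]
      simp
    · rw [hX, Matrix.mul_assoc, Matrix.fromCols_mul_fromRows,
        Matrix.mul_nonsing_inv _ hD₁u]
      simpa using isPolyMat_mul hMpoly hU₁.1
  · rintro ⟨h0, hP⟩
    set X := R₂ * V₁⁻¹ with hXdef
    set X₁ := X.toCols₁
    set X₂ := X.toCols₂
    have hXcols : Matrix.fromCols X₁ X₂ = X := Matrix.fromCols_toCols X
    have hX₂ : X₂ = 0 := by
      have := h0
      rw [← hXcols, Matrix.fromCols_mul_fromRows] at this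
      simpa using this
    refine ⟨(X * Matrix.fromRows D₁⁻¹ (0 : Matrix (Fin m) (Fin q₁) (RatFunc ℝ))) * U₁⁻¹, isPolyMat_mul hP hU₁.2.1, ?_⟩
    have hmid : X * (Matrix.fromRows D₁⁻¹ (0 : Matrix (Fin m) (Fin q₁) (RatFunc ℝ)) *
        Matrix.fromCols D₁ (0 : Matrix (Fin q₁) (Fin m) (RatFunc ℝ))) = X := by
      rw [Matrix.fromRows_mul_fromCols, ← hXcols, Matrix.fromCols_mul_fromBlocks,
        Matrix.nonsing_inv_mul _ hD₁u]
      simp [hX₂]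
    have hXV : X * V₁ = R₂ := by
      rw [hXdef, Matrix.nonsing_inv_mul_cancel_right _ _ hV₁.2.2]
    rw [hSmith]
    simp only [Matrix.mul_assoc]
    rw [Matrix.nonsing_inv_mul_cancel_left _ _ hU₁.2.2,
      ← Matrix.mul_assoc (Matrix.fromRows D₁⁻¹ (0 : Matrix (Fin m) (Fin q₁) (RatFunc ℝ))),
      ← Matrix.mul_assoc X, hmid, hXV]
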